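/- Submultiplicativity of the maximized HMM likelihood: define M_{s,t}(θ) = max_{k} Σ_{x₂,…,x_{t−s}} f_{k}(Y_{s+1}) α_{k,x₂} f_{x₂}(Y_{s+2}) ∏_{i=3}^{t−s} α_{x_{i−1},x_i} f_{x_i}(Y_{s+i}). Then M_{s,t}(θ) ≤ M_{s,u}(θ) · M_{u,t}(θ) for all s < u < t, so that log M_{s,t}(θ) is a subadditive process. -/

import Mathlib

open Matrix in
/-- The maximized HMM partial likelihood
`M_{s,t} = max_k (D_{Y_{s+1}} Γ D_{Y_{s+2}} Γ ⋯ D_{Y_t} 1)_k`. -/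
noncomputable def hmmMaxLik {K : ℕ} [NeZero K] {S : Type*}
    (Γ : Matrix (Fin K) (Fin K) ℝ) (f : Fin K → S → ℝ) (Y : ℕ → S)
    (s t : ℕ) : ℝ :=
  Finset.univ.sup' Finset.univ_nonempty (fun k : Fin K =>
    (((List.range (t - s)).map
        (fun i => Matrix.diagonal (fun j : Fin K => f j (Y (s + 1 + i))) * Γ)).prod.mulVec
      (fun _ => (1 : ℝ))) k)

lemma list_prod_nonneg {K : ℕ} (l : List (Matrix (Fin K) (Fin K) ℝ))
    (h : ∀ A ∈ l, ∀ i j, 0 ≤ A i j) : ∀ i j, 0 ≤ l.prod i j := by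
  induction l with
  | nil =>
    intro i j
    simp only [List.prod_nil, Matrix.one_apply]
    positivity
  | cons A l ih =>
    intro i j
    rw [List.prod_cons, Matrix.mul_apply]
    exact Finset.sum_nonneg fun k _ =>
      mul_nonneg (h A List.mem_cons_self i k)
        (ih (fun B hB => h B (List.mem_cons_of_mem _ hB)) k j)

/-- Submultiplicativity of the maximized HMM likelihood:
`M_{s,t}(θ) ≤ M_{s,u}(θ) · M_{u,t}(θ)` for `s < u < t`. -/
theorem hmmMaxLik_submultiplicative {K : ℕ} [NeZero K] {S : Type*}
    (Γ : Matrix (Fin K) (Fin K) ℝ)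
    (hΓnonneg : ∀ i j, 0 ≤ Γ i j) (hΓrows : ∀ i, ∑ j, Γ i j = 1)
    (f : Fin K → S → ℝ) (hf : ∀ k x, 0 ≤ f k x)
    (Y : ℕ → S) :
    ∀ s u t : ℕ, s < u → u < t →
      hmmMaxLik Γ f Y s t ≤ hmmMaxLik Γ f Y s u * hmmMaxLik Γ f Y u t := by
  intro s u t hsu hut
  set P : ℕ → ℕ → Matrix (Fin K) (Fin K) ℝ := fun a b =>
    ((List.range (b - a)).map
      (fun i => Matrix.diagonal (fun j : Fin K => f j (Y (a + 1 + i))) * Γ)).prod with hP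
  have hPnonneg : ∀ a b i j, 0 ≤ P a b i j := by
    intro a b i j
    apply list_prod_nonneg
    intro A hA i j
    simp only [List.mem_map] at hA
    obtain ⟨n, -, rfl⟩ := hA
    rw [Matrix.mul_apply]
    refine Finset.sum_nonneg fun k _ => mul_nonneg ?_ (hΓnonneg k j)
    rcases eq_or_ne i k with rfl | hik
    · rw [Matrix.diagonal_apply_eq]; exact hf _ _
    · rw [Matrix.diagonal_apply_ne _ hik]
  have hsplit : P s t = P s u * P u t := by
    have h1 : t - s = (u - s) + (t - u) := by omega
    simp only [hP]
    rw [h1, List.range_add, List.map_append, List.prod_append, List.map_map]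
    congr 1
    congr 1
    apply List.map_congr_left
    intro i _
    show Matrix.diagonal (fun j : Fin K => f j (Y (s + 1 + ((u-s) + i)))) * Γ = _
    have : s + 1 + ((u-s) + i) = u + 1 + i := by omega
    rw [this]
  -- vector of ones
  have hMut_nonneg : ∀ j, 0 ≤ (P u t).mulVec (fun _ => (1:ℝ)) j := by
    intro j
    unfold Matrix.mulVec dotProduct
    exact Finset.sum_nonneg fun k _ => by simpa using hPnonneg u t j k
  have hle_ut : ∀ j, (P u t).mulVec (fun _ => (1:ℝ)) j ≤ hmmMaxLik Γ f Y u t := by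
    intro j
    exact Finset.le_sup' _ (Finset.mem_univ j)
  have hle_su : ∀ k, (P s u).mulVec (fun _ => (1:ℝ)) k ≤ hmmMaxLik Γ f Y s u := by
    intro k
    exact Finset.le_sup' _ (Finset.mem_univ k)
  have hMut0 : 0 ≤ hmmMaxLik Γ f Y u t :=
    le_trans (hMut_nonneg ⟨0, Nat.pos_of_ne_zero (NeZero.ne K)⟩)
      (hle_ut ⟨0, Nat.pos_of_ne_zero (NeZero.ne K)⟩)
  show Finset.univ.sup' _ _ ≤ _
  apply Finset.sup'_le
  intro k _
  have : ((P s t).mulVec (fun _ => (1:ℝ))) k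
      = ∑ j, P s u k j * (P u t).mulVec (fun _ => (1:ℝ)) j := by
    rw [hsplit, ← Matrix.mulVec_mulVec]
    rfl
  calc ((P s t).mulVec (fun _ => (1:ℝ))) k
      = ∑ j, P s u k j * (P u t).mulVec (fun _ => (1:ℝ)) j := this
    _ ≤ ∑ j, P s u k j * hmmMaxLik Γ f Y u t :=
        Finset.sum_le_sum fun j _ =>
          mul_le_mul_of_nonneg_left (hle_ut j) (hPnonneg s u k j)
    _ = ((P s u).mulVec (fun _ => (1:ℝ))) k * hmmMaxLik Γ f Y u t := by
        rw [← Finset.sum_mul]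
        congr 1
        unfold Matrix.mulVec dotProduct
        simp
    _ ≤ hmmMaxLik Γ f Y s u * hmmMaxLik Γ f Y u t :=
        mul_le_mul_of_nonneg_right (hle_su k) hMut0
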